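/- Let Γ be a finite connected graph, let f : A(Γ) → ℝ be a nonzero homomorphism with discrete (infinite cyclic) image, and let (Γ₁, Γ₂, Γ₃) be a splitting of Γ. If the restriction of f to A(Γ₃) is identically zero, then ker(f) admits a surjective group homomorphism onto a free group of infinite (countable) rank. -/

import Mathlib

/-- The defining relators of the right-angled Artin group of a graph. -/
def raagRels {V : Type*} (Γ : SimpleGraph V) : Set (FreeGroup V) :=
  {r | ∃ v w : V, Γ.Adj v w ∧
    r = FreeGroup.of v * FreeGroup.of w * (FreeGroup.of v)⁻¹ * (FreeGroup.of w)⁻¹}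

/-- The right-angled Artin group of a graph Γ. -/
def RAAG {V : Type*} (Γ : SimpleGraph V) : Type _ := PresentedGroup (raagRels Γ)

noncomputable instance {V : Type*} (Γ : SimpleGraph V) : Group (RAAG Γ) :=
  inferInstanceAs (Group (PresentedGroup (raagRels Γ)))

/-- The generator of `RAAG Γ` corresponding to a vertex. -/
def RAAG.of {V : Type*} {Γ : SimpleGraph V} (v : V) : RAAG Γ := PresentedGroup.of v

/-- A homomorphism `A(Γ) → (ℝ,+)` (encoded as a monoid hom to `Multiplicative ℝ`) is
discrete if its image is an infinite cyclic subgroup of ℝ, i.e. the set of integer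
multiples of some nonzero real number. -/
def IsDiscreteChar {V : Type*} {Γ : SimpleGraph V} (f : RAAG Γ →* Multiplicative ℝ) : Prop :=
  ∃ a : ℝ, a ≠ 0 ∧ (∀ x : RAAG Γ, ∃ n : ℤ, (f x).toAdd = n • a) ∧
    ∃ x : RAAG Γ, (f x).toAdd = a

open FreeGroup SemidirectProduct Multiplicative
noncomputable def shiftA (k : ℤ) : FreeGroup ℤ ≃* FreeGroup ℤ := freeGroupCongr (Equiv.addRight k)
@[simp] lemma shiftA_of (k j : ℤ) : shiftA k (FreeGroup.of j) = FreeGroup.of (j + k) := by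
  simp [shiftA]
noncomputable def shiftH : Multiplicative ℤ →* MulAut (FreeGroup ℤ) :=
  MonoidHom.mk' (fun k => shiftA k.toAdd) (by
    intro a b
    apply MulEquiv.toMonoidHom_injective
    apply FreeGroup.ext_hom
    intro j
    simp [MulAut.mul_apply]; ring_nf)
@[simp] lemma shiftH_of (k j : ℤ) : shiftH (ofAdd k) (FreeGroup.of j) = FreeGroup.of (j + k) := by
  simp [shiftH]


noncomputable abbrev GG := SemidirectProduct (FreeGroup ℤ) (Multiplicative ℤ) shiftH

noncomputable def SS (k : ℤ) : GG := inr (ofAdd k)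
noncomputable def UU : GG := ⟨FreeGroup.of 0, ofAdd 1⟩

@[simp] lemma SS_right (k : ℤ) : (SS k).right = ofAdd k := rfl
@[simp] lemma SS_left (k : ℤ) : (SS k).left = 1 := rfl

lemma SS_mul (a b : ℤ) : SS a * SS b = SS (a + b) := by
  rw [SS, SS, SS, ofAdd_add]
  exact (MonoidHom.map_mul (inr : Multiplicative ℤ →* GG) _ _).symm

lemma SS_comm (a b : ℤ) : Commute (SS a) (SS b) := by
  unfold Commute SemiconjBy
  rw [SS_mul, SS_mul, add_comm]

lemma SS_zpow (a t : ℤ) : SS a ^ t = SS (a * t) := by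
  rw [SS, SS, ← map_zpow]
  congr 1
  rw [← ofAdd_zsmul, smul_eq_mul, mul_comm]

/-- the list x₀ x₁ ... x_{k-1} -/
noncomputable def natList (k : ℕ) : List (FreeGroup ℤ) :=
  (List.range k).map fun j : ℕ => FreeGroup.of (j : ℤ)

lemma upow : ∀ k : ℕ, UU ^ k = ⟨(natList k).prod, ofAdd (k : ℤ)⟩
  | 0 => by
      ext
      · simp [natList]
      · simp
  | (k+1) => by
      rw [pow_succ, upow k]
      ext
      · rw [mul_left]
        show (natList k).prod * shiftH (ofAdd (k : ℤ)) (FreeGroup.of (0 : ℤ)) = _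
        rw [shiftH_of, natList, natList, List.range_succ, List.map_append, List.prod_append]
        simp
      · rw [mul_right]
        show ofAdd (k : ℤ) * ofAdd (1 : ℤ) = ofAdd ((k + 1 : ℕ) : ℤ)
        rw [← ofAdd_add]
        push_cast
        ring_nf

noncomputable def theta (k : ℤ) : FreeGroup ℤ →* FreeGroup ℤ :=
  FreeGroup.lift fun j => if k ∣ j then FreeGroup.of (j / k) else 1

lemma theta_of (k j : ℤ) :
    theta k (FreeGroup.of j) = if k ∣ j then FreeGroup.of (j / k) else 1 := by
  simp [theta]

lemma theta_aux (k : ℕ) (hk : 0 < k) (t : ℤ) : ∀ m : ℕ, m ≤ k →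
    theta k (((List.range m).map fun j : ℕ => FreeGroup.of ((j : ℤ) + k * t)).prod)
      = if m = 0 then 1 else FreeGroup.of t
  | 0, _ => by simp
  | (m+1), h => by
      have hsplit : ((List.range (m+1)).map fun j : ℕ => FreeGroup.of ((j : ℤ) + k * t))
          = ((List.range m).map fun j : ℕ => FreeGroup.of ((j : ℤ) + k * t))
            ++ [FreeGroup.of ((m : ℤ) + k * t)] := by
        rw [List.range_succ, List.map_append, List.map_singleton]
      rw [hsplit, List.prod_append, List.prod_singleton, MonoidHom.map_mul,
        theta_aux k hk t m (Nat.le_of_succ_le h), theta_of]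
      rcases Nat.eq_zero_or_pos m with rfl | hm
      · have hdvd : (k : ℤ) ∣ ((0 : ℕ) : ℤ) + k * t := ⟨t, by push_cast; ring⟩
        rw [if_pos rfl, if_pos hdvd, one_mul, if_neg (Nat.succ_ne_zero 0)]
        congr 1
        rw [Nat.cast_zero, zero_add]
        exact Int.mul_ediv_cancel_left t (by exact_mod_cast hk.ne')
      · have hnd : ¬ ((k : ℤ) ∣ ((m : ℤ) + k * t)) := by
          intro hd
          have h2 : (k : ℤ) ∣ (m : ℤ) := by
            have := dvd_sub hd ⟨t, rfl⟩
            simpa using this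
          have := Int.le_of_dvd (by exact_mod_cast hm) h2
          omega
        rw [if_neg hm.ne', if_neg hnd, if_neg (Nat.succ_ne_zero m), mul_one]

lemma theta_block (k : ℕ) (hk : 0 < k) (t : ℤ) :
    theta k (shiftH (ofAdd ((k : ℤ) * t)) (natList k).prod) = FreeGroup.of t := by
  have h1 : shiftH (ofAdd ((k : ℤ) * t)) (natList k).prod
      = ((List.range k).map fun j : ℕ => FreeGroup.of ((j : ℤ) + k * t)).prod := by
    rw [natList, map_list_prod, List.map_map]
    have hfun : ((shiftH (ofAdd ((k : ℤ) * t))) ∘ fun j : ℕ => FreeGroup.of (j : ℤ))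
        = fun j : ℕ => FreeGroup.of ((j : ℤ) + k * t) := by
      funext j
      exact shiftH_of ((k : ℤ) * t) (j : ℤ)
    rw [hfun]
  rw [h1, theta_aux k hk t k le_rfl, if_neg hk.ne']

/-- The homomorphism `Multiplicative ℤ →* Multiplicative ℝ` given by `n ↦ n • α`. -/
noncomputable def iota (α : ℝ) : Multiplicative ℤ →* Multiplicative ℝ :=
  AddMonoidHom.toMultiplicative (zmultiplesHom ℝ α)

lemma iota_apply (α : ℝ) (z : Multiplicative ℤ) : iota α z = ofAdd (z.toAdd • α) := rfl

lemma iota_eq_one (α : ℝ) (hα : α ≠ 0) (z : Multiplicative ℤ) (h : iota α z = 1) : z = 1 := by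
  rw [iota_apply] at h
  have h2 : z.toAdd • α = 0 := by
    have := congrArg Multiplicative.toAdd h
    simpa using this
  rcases smul_eq_zero.mp h2 with h3 | h3
  · apply Multiplicative.toAdd.injective
    simpa using h3
  · exact absurd h3 hα

/-- conjugation computation in `GG` -/
lemma conj_SS (c e : ℤ) (x : GG) :
    SS c * x * SS e = ⟨shiftH (ofAdd c) x.left, ofAdd c * x.right * ofAdd e⟩ := by
  ext
  · rw [mul_left, mul_left]
    show (1 * shiftH (ofAdd c) x.left) * shiftH ((ofAdd c * x.right)) (1 : FreeGroup ℤ) = _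
    rw [one_mul, _root_.map_one (shiftH (ofAdd c * x.right)), mul_one]
  · rfl

/-- Key abstract lemma: a hom `g` to `GG` intertwining `f` (via `iota`) whose kernel-image
hits a generating family of the free-group part yields the desired surjection. -/
lemma key {V : Type*} {Γ : SimpleGraph V} (f : RAAG Γ →* Multiplicative ℝ)
    (α : ℝ) (hα : α ≠ 0) (g : RAAG Γ →* GG)
    (hfg : f = (iota α).comp (rightHom.comp g))
    (θ : FreeGroup ℤ →* FreeGroup ℤ)
    (hgen : ∀ t : ℤ, ∃ y : RAAG Γ, rightHom (g y) = 1 ∧ θ (g y).left = FreeGroup.of t) :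
    ∃ φ : f.ker →* FreeGroup ℕ, Function.Surjective φ := by
  have hker : ∀ x : RAAG Γ, f x = 1 → (g x).right = 1 := by
    intro x hx
    rw [hfg] at hx
    exact iota_eq_one α hα _ hx
  have hmem : ∀ y : RAAG Γ, rightHom (g y) = 1 → y ∈ f.ker := by
    intro y hy
    rw [MonoidHom.mem_ker, hfg]
    show iota α (rightHom (g y)) = 1
    rw [hy]
    exact _root_.map_one (iota α)
  let φ₀ : f.ker →* FreeGroup ℤ := MonoidHom.mk' (fun x => θ (g x.1).left) (by
    rintro ⟨x, hx⟩ ⟨y, hy⟩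
    show θ (g (x * y)).left = _
    rw [map_mul g, mul_left, hker x (MonoidHom.mem_ker.mp hx), MonoidHom.map_one shiftH, MulAut.one_apply,
      MonoidHom.map_mul θ])
  have hsurj0 : ∀ w : FreeGroup ℤ, ∃ x : f.ker, φ₀ x = w := by
    intro w
    induction w using FreeGroup.induction_on with
    | C1 => exact ⟨1, MonoidHom.map_one φ₀⟩
    | of t =>
        obtain ⟨y, hy1, hy2⟩ := hgen t
        exact ⟨⟨y, hmem y hy1⟩, hy2⟩
    | inv_of t ih =>
        obtain ⟨x, hx⟩ := ih
        exact ⟨x⁻¹, by rw [MonoidHom.map_inv φ₀, hx]⟩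
    | mul x y ihx ihy =>
        obtain ⟨x1, hx1⟩ := ihx
        obtain ⟨y1, hy1⟩ := ihy
        exact ⟨x1 * y1, by rw [MonoidHom.map_mul φ₀, hx1, hy1]⟩
  refine ⟨(freeGroupCongr (Denumerable.eqv ℤ)).toMonoidHom.comp φ₀, ?_⟩
  intro z
  obtain ⟨x, hx⟩ := hsurj0 ((freeGroupCongr (Denumerable.eqv ℤ)).symm z)
  refine ⟨x, ?_⟩
  show freeGroupCongr (Denumerable.eqv ℤ) (φ₀ x) = z
  rw [hx, MulEquiv.apply_symm_apply]

lemma build_g {V : Type*} {Γ : SimpleGraph V} (c : V → GG)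
    (hc : ∀ a b : V, Γ.Adj a b → Commute (c a) (c b)) :
    ∃ g : RAAG Γ →* GG, ∀ v, g (RAAG.of v) = c v := by
  have h : ∀ r ∈ raagRels Γ, FreeGroup.lift c r = 1 := by
    rintro r ⟨v, w, hadj, rfl⟩
    rw [MonoidHom.map_mul, MonoidHom.map_mul, MonoidHom.map_mul, MonoidHom.map_inv, MonoidHom.map_inv,
      FreeGroup.lift_apply_of, FreeGroup.lift_apply_of]
    rw [(hc v w hadj).eq]
    group
  exact ⟨PresentedGroup.toGroup h, fun v => PresentedGroup.toGroup.of h⟩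

lemma build_hfg {V : Type*} {Γ : SimpleGraph V} (f : RAAG Γ →* Multiplicative ℝ)
    (α : ℝ) (m : V → ℤ) (hm : ∀ v : V, (f (RAAG.of v)).toAdd = m v • α)
    (g : RAAG Γ →* GG) (hr : ∀ v : V, (g (RAAG.of v)).right = ofAdd (m v)) :
    f = (iota α).comp (rightHom.comp g) := by
  apply PresentedGroup.ext
  intro v
  show f (RAAG.of v) = iota α (rightHom (g (RAAG.of v)))
  have h1 : rightHom (g (RAAG.of v)) = ofAdd (m v) := hr v
  rw [h1, iota_apply, ← ofAdd_toAdd (f (RAAG.of v)), hm v]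
  rfl

lemma hgen_caseA {V : Type*} {Γ : SimpleGraph V} (g : RAAG Γ →* GG)
    (v₀ w₀ : V) (mm nn : ℤ) (hmm : mm ≠ 0) (hnn : nn ≠ 0)
    (hv : g (RAAG.of v₀) = SS mm) (hw : g (RAAG.of w₀) = UU ^ nn) :
    ∀ t : ℤ, ∃ y : RAAG Γ,
      rightHom (g y) = 1 ∧
      theta ((mm.natAbs * nn.natAbs : ℕ) : ℤ) (g y).left = FreeGroup.of t := by
  intro t
  set K : ℕ := mm.natAbs * nn.natAbs with hK
  have hKpos : 0 < K := Nat.mul_pos (Int.natAbs_pos.mpr hmm) (Int.natAbs_pos.mpr hnn)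
  set a : ℤ := mm.sign * nn.natAbs with ha
  set b : ℤ := nn.sign * mm.natAbs with hb
  have hma : mm * a = (K : ℤ) := by
    rw [ha, ← mul_assoc, Int.mul_sign_self]
    push_cast [hK]
    ring
  have hnb : nn * b = (K : ℤ) := by
    rw [hb, ← mul_assoc, Int.mul_sign_self]
    push_cast [hK]
    ring
  set y : RAAG Γ :=
    (RAAG.of v₀) ^ (a * t) * (RAAG.of w₀) ^ b * (RAAG.of v₀) ^ (a * (-t - 1)) with hy
  have hgy : g y = ⟨shiftH (ofAdd ((K : ℤ) * t)) (natList K).prod, 1⟩ := by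
    rw [hy, MonoidHom.map_mul, MonoidHom.map_mul, MonoidHom.map_zpow, MonoidHom.map_zpow,
      MonoidHom.map_zpow, hv, hw, SS_zpow, SS_zpow, ← zpow_mul, hnb, zpow_natCast, upow K]
    have h1 : mm * (a * t) = (K : ℤ) * t := by rw [← mul_assoc, hma]
    have h2 : mm * (a * (-t - 1)) = (K : ℤ) * (-t - 1) := by rw [← mul_assoc, hma]
    rw [h1, h2, conj_SS]
    ext
    · rfl
    · show ofAdd ((K : ℤ) * t) * ofAdd ((K : ℕ) : ℤ) * ofAdd ((K : ℤ) * (-t - 1)) = ofAdd 0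
      rw [← ofAdd_add, ← ofAdd_add]
      congr 1
      ring
  refine ⟨y, ?_, ?_⟩
  · show (g y).right = 1
    rw [hgy]
  · rw [hgy]
    exact theta_block K hKpos t

lemma hgen_caseBC {V : Type*} {Γ : SimpleGraph V} (g : RAAG Γ →* GG)
    (v₀ w₀ : V) (nn : ℤ) (hnn : nn ≠ 0)
    (hv : g (RAAG.of v₀) = inl (FreeGroup.of (0 : ℤ))) (hw : g (RAAG.of w₀) = SS nn) :
    ∀ t : ℤ, ∃ y : RAAG Γ,
      rightHom (g y) = 1 ∧ theta nn (g y).left = FreeGroup.of t := by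
  intro t
  set y : RAAG Γ := (RAAG.of w₀) ^ t * (RAAG.of v₀) * (RAAG.of w₀) ^ (-t) with hy
  have hgy : g y = ⟨FreeGroup.of (0 + nn * t), 1⟩ := by
    rw [hy, MonoidHom.map_mul, MonoidHom.map_mul, MonoidHom.map_zpow, MonoidHom.map_zpow,
      hv, hw, SS_zpow, SS_zpow, conj_SS]
    ext
    · show shiftH (ofAdd (nn * t)) ((inl (FreeGroup.of (0:ℤ)) : GG).left) = _
      rw [left_inl, shiftH_of]
    · show ofAdd (nn * t) * (inl (FreeGroup.of (0:ℤ)) : GG).right * ofAdd (nn * (-t)) = ofAdd 0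
      rw [right_inl, mul_one, ← ofAdd_add]
      congr 1
      ring
  refine ⟨y, ?_, ?_⟩
  · show (g y).right = 1
    rw [hgy]
  · rw [hgy, theta_of, if_pos ⟨t, by ring⟩]
    congr 1
    rw [zero_add]
    exact Int.mul_ediv_cancel_left t hnn

lemma SS_zero : SS 0 = 1 := rfl

lemma UU_zpow_right (z : ℤ) : (UU ^ z).right = ofAdd z := by
  have h0 : (UU ^ z).right = rightHom (UU ^ z) := rfl
  rw [h0, MonoidHom.map_zpow, show rightHom UU = ofAdd (1 : ℤ) from rfl, ← ofAdd_zsmul,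
    smul_eq_mul, mul_one]


/-- Let Γ be a finite connected graph, f : A(Γ) → ℝ a nonzero homomorphism with
discrete image, and (Γ₁, Γ₂, Γ₃) a splitting of Γ (full subgraphs encoded by their vertex
sets). If f vanishes identically on A(Γ₃) (equivalently, on the generators coming from S₃),
then ker(f) surjects onto a free group of countably infinite rank. -/
theorem stmt_7 {V : Type*} [Fintype V] (Γ : SimpleGraph V) (hconn : Γ.Connected)
    (f : RAAG Γ →* Multiplicative ℝ) (hf0 : f ≠ 1) (hdisc : IsDiscreteChar f)
    (S₁ S₂ S₃ : Set V)
    (hne1 : S₁.Nonempty) (hne2 : S₂.Nonempty) (hne3 : S₃.Nonempty)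
    (hd12 : S₁ ≠ S₂) (hd13 : S₁ ≠ S₃) (hd23 : S₂ ≠ S₃)
    (hcover : S₁ ∪ S₂ = Set.univ) (hmeet : S₁ ∩ S₂ = S₃)
    (hedges : ∀ a b : V, Γ.Adj a b → (a ∈ S₁ ∧ b ∈ S₁) ∨ (a ∈ S₂ ∧ b ∈ S₂))
    (hvanish : ∀ v ∈ S₃, f (RAAG.of v) = 1) :
    ∃ φ : f.ker →* FreeGroup ℕ, Function.Surjective φ := by
  classical
  obtain ⟨α, hα, hint, -⟩ := hdisc
  choose m hm using fun v : V => hint (RAAG.of v)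
  have hof : ∀ v : V, f (RAAG.of v) = ofAdd (m v • α) := fun v => by
    rw [← ofAdd_toAdd (f (RAAG.of v)), hm v]
  have hm0 : ∀ v : V, f (RAAG.of v) = 1 → m v = 0 := by
    intro v hv
    rw [hof v] at hv
    have h2 : m v • α = 0 := by simpa using congrArg Multiplicative.toAdd hv
    rcases smul_eq_zero.mp h2 with h3 | h3
    · exact_mod_cast h3
    · exact absurd h3 hα
  have hS3 : ∀ v : V, v ∈ S₁ → v ∈ S₂ → m v = 0 := fun v hv1 hv2 =>
    hm0 v (hvanish v (hmeet ▸ (⟨hv1, hv2⟩ : v ∈ S₁ ∩ S₂)))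
  have hcov1 : ∀ v : V, v ∉ S₁ → v ∈ S₂ := by
    intro v h
    have h2 : v ∈ S₁ ∪ S₂ := by rw [hcover]; trivial
    rcases h2 with h2 | h2
    · exact absurd h2 h
    · exact h2
  have hcov2 : ∀ v : V, v ∉ S₂ → v ∈ S₁ := by
    intro v h
    have h2 : v ∈ S₁ ∪ S₂ := by rw [hcover]; trivial
    rcases h2 with h2 | h2
    · exact h2
    · exact absurd h2 h
  by_cases h1 : ∃ v ∈ S₁, m v ≠ 0 <;> by_cases h2 : ∃ v, v ∉ S₁ ∧ m v ≠ 0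
  · -- Case A : f is nonzero on both sides
    obtain ⟨v₀, hv₀S, hv₀⟩ := h1
    obtain ⟨w₀, hw₀S, hw₀⟩ := h2
    have hcomm : ∀ a b : V, Γ.Adj a b →
        Commute ((fun v => if v ∈ S₁ then SS (m v) else UU ^ (m v)) a)
          ((fun v => if v ∈ S₁ then SS (m v) else UU ^ (m v)) b) := by
      intro a b hadj
      simp only
      rcases hedges a b hadj with ⟨ha, hb⟩ | ⟨ha, hb⟩
      · rw [if_pos ha, if_pos hb]
        exact SS_comm _ _
      · by_cases ha1 : a ∈ S₁
        · rw [if_pos ha1, hS3 a ha1 ha, SS_zero]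
          exact Commute.one_left _
        by_cases hb1 : b ∈ S₁
        · rw [if_pos hb1, hS3 b hb1 hb, SS_zero]
          exact Commute.one_right _
        rw [if_neg ha1, if_neg hb1]
        exact (Commute.refl UU).zpow_zpow _ _
    obtain ⟨g, hg⟩ := build_g (Γ := Γ) (fun v => if v ∈ S₁ then SS (m v) else UU ^ (m v)) hcomm
    have hr : ∀ v : V, (g (RAAG.of v)).right = ofAdd (m v) := by
      intro v
      rw [hg v]
      by_cases hv1 : v ∈ S₁
      · rw [if_pos hv1]; exact SS_right _
      · rw [if_neg hv1]; exact UU_zpow_right _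
    exact key f α hα g (build_hfg f α m hm g hr) _ <| hgen_caseA g v₀ w₀ (m v₀) (m w₀) hv₀ hw₀
      (by rw [hg v₀, if_pos hv₀S]) (by rw [hg w₀, if_neg hw₀S])
  · -- Case C : f vanishes outside S₁
    push_neg at h2
    obtain ⟨w₀, hw₀S, hw₀⟩ := h1
    have hns : ¬ (S₂ ⊆ S₁) := by
      intro hsub
      exact hd23 (by rw [← hmeet, Set.inter_eq_right.mpr hsub])
    obtain ⟨v₀, hv₀2, hv₀1⟩ := Set.not_subset.mp hns
    have hcomm : ∀ a b : V, Γ.Adj a b →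
        Commute ((fun v => if v ∈ S₁ then SS (m v) else inl (FreeGroup.of (0:ℤ))) a)
          ((fun v => if v ∈ S₁ then SS (m v) else inl (FreeGroup.of (0:ℤ))) b) := by
      intro a b hadj
      simp only
      rcases hedges a b hadj with ⟨ha, hb⟩ | ⟨ha, hb⟩
      · rw [if_pos ha, if_pos hb]
        exact SS_comm _ _
      · by_cases ha1 : a ∈ S₁
        · rw [if_pos ha1, hS3 a ha1 ha, SS_zero]
          exact Commute.one_left _
        by_cases hb1 : b ∈ S₁
        · rw [if_pos hb1, hS3 b hb1 hb, SS_zero]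
          exact Commute.one_right _
        rw [if_neg ha1, if_neg hb1]
    obtain ⟨g, hg⟩ := build_g (Γ := Γ)
      (fun v => if v ∈ S₁ then SS (m v) else inl (FreeGroup.of (0:ℤ))) hcomm
    have hr : ∀ v : V, (g (RAAG.of v)).right = ofAdd (m v) := by
      intro v
      rw [hg v]
      by_cases hv1 : v ∈ S₁
      · rw [if_pos hv1]; exact SS_right _
      · rw [if_neg hv1, h2 v hv1]; rfl
    exact key f α hα g (build_hfg f α m hm g hr) _ <| hgen_caseBC g v₀ w₀ (m w₀) hw₀
      (by rw [hg v₀, if_neg hv₀1]) (by rw [hg w₀, if_pos hw₀S])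
  · -- Case B : f vanishes on S₁
    push_neg at h1
    obtain ⟨w₀, hw₀1, hw₀⟩ := h2
    have hw₀2 : w₀ ∈ S₂ := hcov1 w₀ hw₀1
    have hns : ¬ (S₁ ⊆ S₂) := by
      intro hsub
      exact hd13 (by rw [← hmeet, Set.inter_eq_left.mpr hsub])
    obtain ⟨v₀, hv₀1, hv₀2⟩ := Set.not_subset.mp hns
    have hcomm : ∀ a b : V, Γ.Adj a b →
        Commute ((fun v => if v ∈ S₂ then (if v ∈ S₁ then 1 else SS (m v))
            else inl (FreeGroup.of (0:ℤ))) a)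
          ((fun v => if v ∈ S₂ then (if v ∈ S₁ then 1 else SS (m v))
            else inl (FreeGroup.of (0:ℤ))) b) := by
      intro a b hadj
      simp only
      rcases hedges a b hadj with ⟨ha, hb⟩ | ⟨ha, hb⟩
      · by_cases ha2 : a ∈ S₂
        · rw [if_pos ha2, if_pos ha]
          exact Commute.one_left _
        by_cases hb2 : b ∈ S₂
        · rw [if_pos hb2, if_pos hb]
          exact Commute.one_right _
        rw [if_neg ha2, if_neg hb2]
      · by_cases ha1 : a ∈ S₁
        · rw [if_pos ha, if_pos ha1]
          exact Commute.one_left _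
        by_cases hb1 : b ∈ S₁
        · rw [if_pos hb, if_pos hb1]
          exact Commute.one_right _
        rw [if_pos ha, if_neg ha1, if_pos hb, if_neg hb1]
        exact SS_comm _ _
    obtain ⟨g, hg⟩ := build_g (Γ := Γ)
      (fun v => if v ∈ S₂ then (if v ∈ S₁ then 1 else SS (m v))
        else inl (FreeGroup.of (0:ℤ))) hcomm
    have hr : ∀ v : V, (g (RAAG.of v)).right = ofAdd (m v) := by
      intro v
      rw [hg v]
      by_cases hv2 : v ∈ S₂
      · by_cases hv1 : v ∈ S₁
        · rw [if_pos hv2, if_pos hv1, hS3 v hv1 hv2]; rfl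
        · rw [if_pos hv2, if_neg hv1]; exact SS_right _
      · rw [if_neg hv2, h1 v (hcov2 v hv2)]; rfl
    exact key f α hα g (build_hfg f α m hm g hr) _ <| hgen_caseBC g v₀ w₀ (m w₀) hw₀
      (by rw [hg v₀, if_neg hv₀2]) (by rw [hg w₀, if_pos hw₀2, if_neg hw₀1])
  · -- impossible : f would be trivial
    push_neg at h1 h2
    exfalso
    apply hf0
    apply PresentedGroup.ext
    intro v
    show f (RAAG.of v) = 1
    have hmv : m v = 0 := by
      by_cases hv1 : v ∈ S₁
      · exact h1 v hv1
      · exact h2 v hv1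
    rw [hof v, hmv]
    simp
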